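/- Let μ and μ' be mutually absolutely continuous probability measures on K, and let β ≥ 1 be such that dμ/dμ' ≤ β and dμ'/dμ ≤ β almost everywhere. Let σ be a probability measure on K with σ ≪ μ and dσ/dμ ∈ L²(μ). Then ‖dσ/dμ' − 1‖_{L²(μ')} ≤ β^{3/2} · ‖dσ/dμ − 1‖_{L²(μ)} + √β · (β − 1). -/

import Mathlib

open MeasureTheory

lemma sqrt_integral_add_sq_le {α : Type*} [MeasurableSpace α] {γ : Measure α}
    {u v : α → ℝ} (hu : MemLp u 2 γ) (hv : MemLp v 2 γ) :
    Real.sqrt (∫ x, (u x + v x) ^ 2 ∂γ) ≤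
      Real.sqrt (∫ x, u x ^ 2 ∂γ) + Real.sqrt (∫ x, v x ^ 2 ∂γ) := by
  set A := ∫ x, u x ^ 2 ∂γ with hA
  set B := ∫ x, v x ^ 2 ∂γ with hB
  have hA0 : 0 ≤ A := integral_nonneg fun x => sq_nonneg _
  have hB0 : 0 ≤ B := integral_nonneg fun x => sq_nonneg _
  have huv : Integrable (fun x => u x * v x) γ := by
    refine Integrable.mono' ((hu.integrable_sq.add hv.integrable_sq).div_const 2)
      (hu.aestronglyMeasurable.mul hv.aestronglyMeasurable) ?_
    filter_upwards with x
    simp only [Pi.add_apply, Real.norm_eq_abs, abs_mul]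
    nlinarith [sq_nonneg (|u x| - |v x|), sq_abs (u x), sq_abs (v x), abs_nonneg (u x),
      abs_nonneg (v x)]
  have hCS : ∫ x, u x * v x ∂γ ≤ Real.sqrt A * Real.sqrt B := by
    have h2 : (ENNReal.ofReal (2:ℝ)) = 2 := by norm_num
    have := integral_mul_le_Lp_mul_Lq_of_nonneg (μ := γ)
      Real.HolderConjugate.two_two
      (f := fun x => |u x|) (g := fun x => |v x|)
      (Filter.Eventually.of_forall fun x => abs_nonneg _)
      (Filter.Eventually.of_forall fun x => abs_nonneg _)
      (h2 ▸ hu.abs) (h2 ▸ hv.abs)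
    have e1 : ∫ x, |u x| ^ (2:ℝ) ∂γ = A := by
      rw [hA]
      refine integral_congr_ae (Filter.Eventually.of_forall fun x => ?_)
      show |u x| ^ (2:ℝ) = u x ^ 2
      rw [show ((2:ℝ) = ((2:ℕ):ℝ)) by norm_num, Real.rpow_natCast, sq_abs]
    have e2 : ∫ x, |v x| ^ (2:ℝ) ∂γ = B := by
      rw [hB]
      refine integral_congr_ae (Filter.Eventually.of_forall fun x => ?_)
      show |v x| ^ (2:ℝ) = v x ^ 2
      rw [show ((2:ℝ) = ((2:ℕ):ℝ)) by norm_num, Real.rpow_natCast, sq_abs]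
    calc ∫ x, u x * v x ∂γ ≤ ∫ x, |u x| * |v x| ∂γ := by
          refine integral_mono_ae huv (huv.abs.congr ?_) ?_
          · exact Filter.Eventually.of_forall fun x => by simpa using abs_mul (u x) (v x)
          · exact Filter.Eventually.of_forall fun x => (le_abs_self _).trans_eq (abs_mul _ _)
      _ ≤ (∫ x, |u x| ^ (2:ℝ) ∂γ) ^ ((1:ℝ)/2) * (∫ x, |v x| ^ (2:ℝ) ∂γ) ^ ((1:ℝ)/2) := this
      _ = Real.sqrt A * Real.sqrt B := by
          rw [e1, e2, Real.sqrt_eq_rpow, Real.sqrt_eq_rpow]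
  have hexp : ∫ x, (u x + v x) ^ 2 ∂γ = A + 2 * ∫ x, u x * v x ∂γ + B := by
    have : (fun x => (u x + v x) ^ 2) = fun x => u x ^ 2 + 2 * (u x * v x) + v x ^ 2 := by
      funext x; ring
    rw [this, integral_add (by exact (hu.integrable_sq.add (huv.const_mul 2)))
      hv.integrable_sq, integral_add hu.integrable_sq (huv.const_mul 2), integral_const_mul]
  rw [hexp]
  have h1 : A + 2 * ∫ x, u x * v x ∂γ + B ≤ (Real.sqrt A + Real.sqrt B) ^ 2 := by
    have sA := Real.sq_sqrt hA0
    have sB := Real.sq_sqrt hB0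
    nlinarith [hCS]
  calc Real.sqrt (A + 2 * ∫ x, u x * v x ∂γ + B) ≤ Real.sqrt ((Real.sqrt A + Real.sqrt B) ^ 2) :=
        Real.sqrt_le_sqrt h1
    _ = Real.sqrt A + Real.sqrt B := by
        rw [Real.sqrt_sq (by positivity)]

/-- if `μ, μ'` are mutually absolutely continuous probability measures on `K`
with density ratios bounded by `β` in both directions, and `σ ≪ μ` has `dσ/dμ ∈ L²(μ)`, then
`‖dσ/dμ' − 1‖_{L²(μ')} ≤ β^(3/2)·‖dσ/dμ − 1‖_{L²(μ)} + √β·(β − 1)`. -/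
theorem l2_error_transfer
    {d : ℕ} (K : Set (EuclideanSpace ℝ (Fin d)))
    (hKcomp : IsCompact K) (hKconv : Convex ℝ K) (hKint : (interior K).Nonempty)
    (μ μ' σ : Measure (EuclideanSpace ℝ (Fin d)))
    [IsProbabilityMeasure μ] [IsProbabilityMeasure μ'] [IsProbabilityMeasure σ]
    (hμK : μ Kᶜ = 0) (hμ'K : μ' Kᶜ = 0) (hσK : σ Kᶜ = 0)
    (hacc : μ ≪ μ') (hacc' : μ' ≪ μ)
    (β : ℝ) (hβ : 1 ≤ β)
    (hbd : ∀ᵐ x ∂μ', (μ.rnDeriv μ' x).toReal ≤ β)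
    (hbd' : ∀ᵐ x ∂μ, (μ'.rnDeriv μ x).toReal ≤ β)
    (hσac : σ ≪ μ)
    (hσL2 : MemLp (fun x => (σ.rnDeriv μ x).toReal) 2 μ) :
    Real.sqrt (∫ x, ((σ.rnDeriv μ' x).toReal - 1) ^ 2 ∂μ') ≤
      β ^ ((3 : ℝ) / 2) * Real.sqrt (∫ x, ((σ.rnDeriv μ x).toReal - 1) ^ 2 ∂μ) +
        Real.sqrt β * (β - 1) := by
  have hβ0 : (0:ℝ) ≤ β := le_trans zero_le_one hβ
  set f : EuclideanSpace ℝ (Fin d) → ℝ := fun x => (σ.rnDeriv μ x).toReal with hf_def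
  set g : EuclideanSpace ℝ (Fin d) → ℝ := fun x => (μ.rnDeriv μ' x).toReal with hg_def
  have hfmeas : Measurable f := (Measure.measurable_rnDeriv σ μ).ennreal_toReal
  have hgmeas : Measurable g := (Measure.measurable_rnDeriv μ μ').ennreal_toReal
  have hg0 : ∀ x, 0 ≤ g x := fun x => ENNReal.toReal_nonneg
  -- lower bound for g
  have hprod : ∀ᵐ x ∂μ', (μ'.rnDeriv μ x) * (μ.rnDeriv μ' x) = 1 := by
    filter_upwards [Measure.rnDeriv_mul_rnDeriv hacc' (κ := μ'), Measure.rnDeriv_self μ']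
      with x h1 h2
    rw [← h2]; exact h1
  have hbd'' : ∀ᵐ x ∂μ', (μ'.rnDeriv μ x).toReal ≤ β := hbd'.filter_mono hacc'.ae_le
  have hglb : ∀ᵐ x ∂μ', 1 - g x ≤ β - 1 := by
    filter_upwards [hprod, hbd''] with x h1 h2
    have hr : (μ'.rnDeriv μ x).toReal * g x = 1 := by
      rw [hg_def]
      rw [← ENNReal.toReal_mul, h1, ENNReal.toReal_one]
    have hpos : 0 < (μ'.rnDeriv μ x).toReal := by
      rcases lt_or_ge 0 ((μ'.rnDeriv μ x).toReal) with h | h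
      · exact h
      · exfalso; nlinarith [hg0 x]
    have hβpos : (0:ℝ) < β := lt_of_lt_of_le zero_lt_one hβ
    have : 1 / β ≤ g x := by
      rw [div_le_iff₀ hβpos]
      calc (1:ℝ) = (μ'.rnDeriv μ x).toReal * g x := hr.symm
        _ ≤ β * g x := mul_le_mul_of_nonneg_right h2 (hg0 x)
        _ = g x * β := mul_comm _ _
    have h1' : 1 ≤ g x * β := (div_le_iff₀ hβpos).mp this
    nlinarith [sq_nonneg (β - 1), hg0 x]
  have habs : ∀ᵐ x ∂μ', |g x - 1| ≤ β - 1 := by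
    filter_upwards [hbd, hglb] with x h1 h2
    rw [abs_le]; constructor <;> [linarith; linarith]
  -- f * g is the density of σ wrt μ'
  have hfg : ∀ᵐ x ∂μ', (σ.rnDeriv μ' x).toReal = f x * g x := by
    filter_upwards [Measure.rnDeriv_mul_rnDeriv hσac (κ := μ')] with x h1
    rw [hf_def, hg_def, ← ENNReal.toReal_mul]
    exact congrArg ENNReal.toReal h1.symm
  have hf1 : MemLp (fun x => f x - 1) 2 μ := hσL2.sub (memLp_const 1)
  have hsqμ : Integrable (fun x => (f x - 1) ^ 2) μ := hf1.integrable_sq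
  have hI : Integrable (fun x => g x * (f x - 1) ^ 2) μ' := by
    haveI : μ.HaveLebesgueDecomposition μ' := Measure.haveLebesgueDecomposition_of_sigmaFinite μ μ'
    have := (integrable_rnDeriv_smul_iff (μ := μ) (ν := μ') (f := fun x => (f x - 1) ^ 2) hacc).mpr hsqμ
    simpa [smul_eq_mul] using this
  have hint_eq : ∫ x, g x * (f x - 1) ^ 2 ∂μ' = ∫ x, (f x - 1) ^ 2 ∂μ := by
    haveI : μ.HaveLebesgueDecomposition μ' := Measure.haveLebesgueDecomposition_of_sigmaFinite μ μ'
    have := integral_rnDeriv_smul (μ := μ) (ν := μ') (f := fun x => (f x - 1) ^ 2) hacc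
    simpa [smul_eq_mul] using this
  -- the two pieces
  set h₁ : EuclideanSpace ℝ (Fin d) → ℝ := fun x => (f x - 1) * g x with hh₁
  set h₂ : EuclideanSpace ℝ (Fin d) → ℝ := fun x => g x - 1 with hh₂
  have hm₁ : AEStronglyMeasurable h₁ μ' :=
    ((hfmeas.sub measurable_const).mul hgmeas).aestronglyMeasurable
  have hsq₁ : Integrable (fun x => h₁ x ^ 2) μ' := by
    have hm : Measurable fun x => h₁ x ^ 2 :=
      ((hfmeas.sub measurable_const).mul hgmeas).pow_const 2
    refine Integrable.mono' (hI.const_mul β) hm.aestronglyMeasurable ?_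
    filter_upwards [hbd] with x hx
    rw [Real.norm_eq_abs, abs_of_nonneg (sq_nonneg _), hh₁]
    have : ((f x - 1) * g x) ^ 2 = (f x - 1) ^ 2 * g x * g x := by ring
    rw [this]
    calc (f x - 1) ^ 2 * g x * g x ≤ (f x - 1) ^ 2 * g x * β :=
          mul_le_mul_of_nonneg_left hx (by positivity)
      _ = β * (g x * (f x - 1) ^ 2) := by ring
  have hmem₁ : MemLp h₁ 2 μ' :=
    (memLp_two_iff_integrable_sq hm₁).mpr hsq₁
  have hmem₂ : MemLp h₂ 2 μ' := by
    refine MemLp.of_bound ((hgmeas.sub measurable_const).aestronglyMeasurable) (β - 1) ?_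
    filter_upwards [habs] with x hx
    rw [Real.norm_eq_abs]; exact hx
  -- bound on ∫ h₁²
  have hb₁ : ∫ x, h₁ x ^ 2 ∂μ' ≤ β * ∫ x, (f x - 1) ^ 2 ∂μ := by
    rw [← hint_eq, ← integral_const_mul]
    refine integral_mono_ae hsq₁ (hI.const_mul β) ?_
    filter_upwards [hbd] with x hx
    rw [hh₁]
    have : ((f x - 1) * g x) ^ 2 = (f x - 1) ^ 2 * g x * g x := by ring
    rw [this]
    calc (f x - 1) ^ 2 * g x * g x ≤ (f x - 1) ^ 2 * g x * β :=
          mul_le_mul_of_nonneg_left hx (by positivity)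
      _ = β * (g x * (f x - 1) ^ 2) := by ring
  -- bound on ∫ h₂²
  have hb₂ : ∫ x, h₂ x ^ 2 ∂μ' ≤ (β - 1) ^ 2 := by
    have : ∫ x, h₂ x ^ 2 ∂μ' ≤ ∫ _x, (β - 1) ^ 2 ∂μ' := by
      refine integral_mono_ae hmem₂.integrable_sq (integrable_const _) ?_
      filter_upwards [habs] with x hx
      calc h₂ x ^ 2 = |h₂ x| ^ 2 := (sq_abs _).symm
        _ ≤ (β - 1) ^ 2 := by
            have h0 : (0:ℝ) ≤ β - 1 := by linarith
            exact pow_le_pow_left₀ (abs_nonneg _) hx 2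
    simpa using this
  -- combine
  have hsum : ∫ x, ((σ.rnDeriv μ' x).toReal - 1) ^ 2 ∂μ' = ∫ x, (h₁ x + h₂ x) ^ 2 ∂μ' := by
    refine integral_congr_ae ?_
    filter_upwards [hfg] with x hx
    rw [hx, hh₁, hh₂]; ring_nf
  rw [hsum]
  have htri := sqrt_integral_add_sq_le hmem₁ hmem₂
  have hB0 : (0:ℝ) ≤ ∫ x, (f x - 1) ^ 2 ∂μ := integral_nonneg fun x => sq_nonneg _
  have hs₁ : Real.sqrt (∫ x, h₁ x ^ 2 ∂μ') ≤
      β ^ ((3:ℝ)/2) * Real.sqrt (∫ x, (f x - 1) ^ 2 ∂μ) := by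
    calc Real.sqrt (∫ x, h₁ x ^ 2 ∂μ') ≤ Real.sqrt (β * ∫ x, (f x - 1) ^ 2 ∂μ) :=
          Real.sqrt_le_sqrt hb₁
      _ = Real.sqrt β * Real.sqrt (∫ x, (f x - 1) ^ 2 ∂μ) := Real.sqrt_mul hβ0 _
      _ ≤ β ^ ((3:ℝ)/2) * Real.sqrt (∫ x, (f x - 1) ^ 2 ∂μ) := by
          refine mul_le_mul_of_nonneg_right ?_ (Real.sqrt_nonneg _)
          rw [Real.sqrt_eq_rpow]
          exact Real.rpow_le_rpow_of_exponent_le hβ (by norm_num)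
  have hs₂ : Real.sqrt (∫ x, h₂ x ^ 2 ∂μ') ≤ Real.sqrt β * (β - 1) := by
    calc Real.sqrt (∫ x, h₂ x ^ 2 ∂μ') ≤ Real.sqrt ((β - 1) ^ 2) := Real.sqrt_le_sqrt hb₂
      _ = β - 1 := Real.sqrt_sq (by linarith)
      _ ≤ Real.sqrt β * (β - 1) := by
          refine le_mul_of_one_le_left (by linarith) ?_
          rw [show (1:ℝ) = Real.sqrt 1 from (Real.sqrt_one).symm]
          exact Real.sqrt_le_sqrt hβ
  exact htri.trans (add_le_add hs₁ hs₂)
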